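/- Let G* be a CPDAG and X, Y two distinct vertices. X is an explicit cause of Y (there is a directed path from X to Y in G*, hence a common causal path in every DAG of the class) if and only if X and Y are d-connected given pa(X, G*) ∪ sib(X, G*) in the DAGs of the equivalence class [G*]. -/

import Mathlib

variable {V : Type*}

/-- A partially directed graph, with directed edges `dir` and undirected edges
`undir`; between two vertices there is at most one edge. -/
structure PDGraph (V : Type*) where
  dir : V → V → Prop
  undir : V → V → Prop
  undir_symm : ∀ {a b}, undir a b → undir b a
  dir_irrefl : ∀ a, ¬ dir a a
  undir_irrefl : ∀ a, ¬ undir a a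
  not_double : ∀ a b, dir a b → ¬ dir b a
  not_mixed : ∀ a b, dir a b → ¬ undir a b

namespace PDGraph

variable (G : PDGraph V)

/-- Two vertices are adjacent if joined by some edge. -/
def adj (a b : V) : Prop := G.dir a b ∨ G.dir b a ∨ G.undir a b

/-- Parents of `x`: vertices with a directed edge into `x`. -/
def pa (x : V) : Set V := {a | G.dir a x}

/-- Children of `x`: vertices with a directed edge from `x`. -/
def ch (x : V) : Set V := {b | G.dir x b}

/-- Siblings (undirected neighbours) of `x`. -/
def sib (x : V) : Set V := {a | G.undir a x}

end PDGraph

/-- A directed-edge relation is a DAG if it has no directed cycle. -/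
def IsDAG (E : V → V → Prop) : Prop := ∀ a, ¬ Relation.TransGen E a a

/-- A v-structure `a → b ← c` in a directed graph, with `a` and `c` non-adjacent. -/
def VStruct (E : V → V → Prop) (a b c : V) : Prop :=
  E a b ∧ E c b ∧ a ≠ c ∧ ¬ E a c ∧ ¬ E c a

/-- The DAG `E` belongs to the Markov equivalence class represented by the
partially directed graph `G`: it is obtained by orienting the undirected edges
of `G` acyclically without creating any new v-structure. -/
def InClass (G : PDGraph V) (E : V → V → Prop) : Prop :=
  IsDAG E ∧
  (∀ a b, G.dir a b → E a b) ∧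
  (∀ a b, G.undir a b → E a b ∨ E b a) ∧
  (∀ a b, E a b → G.adj a b) ∧
  (∀ a b c, VStruct E a b c → G.dir a b ∧ G.dir c b)

/-- `G` is a CPDAG: its class is nonempty, and every undirected edge of `G` is
oriented in both ways among the DAGs of the class (so an edge of `G` is
directed iff it is directed the same way in every DAG of the class). -/
def IsCPDAG (G : PDGraph V) : Prop :=
  (∃ E, InClass G E) ∧ ∀ a b, G.undir a b → ∃ E, InClass G E ∧ E a b

/-- A single step of a partially directed path away from the start. -/
def PDStep (G : PDGraph V) (a b : V) : Prop := G.dir a b ∨ G.undir a b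

/-- `p` is a partially directed path from `x` to `y` in `G`: distinct vertices,
no edge on it points back toward `x`. -/
def IsPDPath (G : PDGraph V) (x y : V) (p : List V) : Prop :=
  p.Nodup ∧ p.Chain' (PDStep G) ∧ p.head? = some x ∧ p.getLast? = some y

/-- A path is chordless in `G` if no two nonconsecutive vertices on it are adjacent. -/
def ChordlessIn (G : PDGraph V) (p : List V) : Prop :=
  ∀ (i j : ℕ) (hi : i < p.length) (hj : j < p.length),
    i + 1 < j → ¬ G.adj (p.get ⟨i, hi⟩) (p.get ⟨j, hj⟩)

/-- The critical set of `x` with respect to `y`: the vertices adjacent to `x`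
lying on (i.e. directly following `x` on) some chordless partially directed
path from `x` to `y`. -/
def criticalSet (G : PDGraph V) (x y : V) : Set V :=
  {c | ∃ p, IsPDPath G x y p ∧ ChordlessIn G p ∧ p[1]? = some c}

/-- One step along a path in the skeleton of the directed graph `E`. -/
def SkelStep (E : V → V → Prop) (a b : V) : Prop := E a b ∨ E b a

/-- The middle vertex `b` of a consecutive triple on a path is active given `Z`:
if it is a collider then it has a descendant in `Z`, otherwise it is not in `Z`. -/
def ActiveTriple (E : V → V → Prop) (Z : Set V) (a b c : V) : Prop :=
  (E a b ∧ E c b → ∃ d ∈ Z, Relation.ReflTransGen E b d) ∧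
  (¬ (E a b ∧ E c b) → b ∉ Z)

/-- `x` and `y` are d-connected given `Z` in the DAG `E`: neither endpoint is in
`Z` and there is a path between them on which every intermediate vertex is active. -/
def DConn (E : V → V → Prop) (Z : Set V) (x y : V) : Prop :=
  x ∉ Z ∧ y ∉ Z ∧ ∃ p : List V, p.Nodup ∧ p.Chain' (SkelStep E) ∧
    p.head? = some x ∧ p.getLast? = some y ∧
    ∀ (i : ℕ) (h : i + 2 < p.length),
      ActiveTriple E Z (p.get ⟨i, by omega⟩) (p.get ⟨i + 1, by omega⟩) (p.get ⟨i + 2, h⟩)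

/-- d-separation: `x ⟂ y | Z` in the DAG `E`. -/
def DSep (E : V → V → Prop) (Z : Set V) (x y : V) : Prop := ¬ DConn E Z x y

/-- `x` is an explicit cause of `y`: `G` itself has a directed path from `x` to `y`. -/
def ExplicitCause (G : PDGraph V) (x y : V) : Prop := Relation.TransGen G.dir x y

/-- `x` is a definite cause of `y`: every DAG in the class has a directed path
from `x` to `y`. -/
def DefiniteCause (G : PDGraph V) (x y : V) : Prop :=
  ∀ E, InClass G E → Relation.TransGen E x y

/-- `x` is a definite non-cause of `y`: no DAG in the class has a directed path
from `x` to `y`. -/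
def DefiniteNonCause (G : PDGraph V) (x y : V) : Prop :=
  ∀ E, InClass G E → ¬ Relation.TransGen E x y

/-- `x` is a possible cause of `y`: it is an ancestor of `y` in some but not
all DAGs of the class. -/
def PossibleCause (G : PDGraph V) (x y : V) : Prop :=
  (∃ E, InClass G E ∧ Relation.TransGen E x y) ∧
  (∃ E, InClass G E ∧ ¬ Relation.TransGen E x y)

/-- `x` is an implicit cause of `y`: a definite cause that is not explicit. -/
def ImplicitCause (G : PDGraph V) (x y : V) : Prop :=
  DefiniteCause G x y ∧ ¬ ExplicitCause G x y

/-- `x` and `y` lie in the same chain component of `G`: they are connected by a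
purely undirected path. -/
def SameChainComp (G : PDGraph V) (x y : V) : Prop := Relation.ReflTransGen G.undir x y

/-- A set of vertices pairwise joined by undirected edges. -/
def UClique (G : PDGraph V) (S : Set V) : Prop :=
  ∀ a ∈ S, ∀ b ∈ S, a ≠ b → G.undir a b

/-- `M` is a maximal clique of the induced subgraph of `G` over the siblings of `x`. -/
def MaxCliqueInSib (G : PDGraph V) (x : V) (M : Set V) : Prop :=
  M ⊆ G.sib x ∧ UClique G M ∧
    ∀ M', M' ⊆ G.sib x → UClique G M' → M ⊆ M' → M' = M

/-- `S` induces a complete subgraph of `G`: all its vertices pairwise adjacent. -/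
def CompleteIn (G : PDGraph V) (S : Set V) : Prop :=
  ∀ a ∈ S, ∀ b ∈ S, a ≠ b → G.adj a b


section Stmt11Aux

open Relation List

variable {G : PDGraph V} {E : V → V → Prop}

private lemma InClass.edge_asym (hE : InClass G E) {a b : V} (h1 : E a b) (h2 : E b a) : False :=
  hE.1 a (Relation.TransGen.head h1 (Relation.TransGen.single h2))

private lemma InClass.rt_cycle (hE : InClass G E) {a b : V} (h1 : Relation.ReflTransGen E a b)
    (h2 : E b a) : False :=
  hE.1 a (Relation.TransGen.tail' h1 h2)

private lemma InClass.mono_t (hE : InClass G E) {a b : V} (h : Relation.TransGen G.dir a b) :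
    Relation.TransGen E a b :=
  Relation.TransGen.mono (r := G.dir) (p := E) (fun _ _ hd => hE.2.1 _ _ hd) a b h

private lemma InClass.mono_rt (hE : InClass G E) {a b : V} (h : Relation.ReflTransGen G.dir a b) :
    Relation.ReflTransGen E a b :=
  Relation.ReflTransGen.mono (r := G.dir) (p := E) (fun _ _ hd => hE.2.1 _ _ hd) a b h

private lemma IsCPDAG.acyclG (hG : IsCPDAG G) {a : V} (h : Relation.TransGen G.dir a a) : False := by
  obtain ⟨E₀, hE₀⟩ := hG.1
  exact hE₀.1 a (hE₀.mono_t h)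

private lemma adj_symm {a b : V} (h : G.adj a b) : G.adj b a := by
  rcases h with h | h | h
  · exact Or.inr (Or.inl h)
  · exact Or.inl h
  · exact Or.inr (Or.inr (G.undir_symm h))

private lemma InClass.adj_of_edge (hE : InClass G E) {a b : V} (h : E a b) : G.adj a b :=
  hE.2.2.2.1 _ _ h

private lemma InClass.vhelper (hE : InClass G E) {a b c : V} (hab : E a b) (hcb : E c b)
    (hne : a ≠ c) (hnd : ¬ G.dir c b) : G.adj a c := by
  by_contra hadj
  have h1 : ¬ E a c := fun h => hadj (hE.adj_of_edge h)
  have h2 : ¬ E c a := fun h => hadj (adj_symm (hE.adj_of_edge h))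
  exact hnd (hE.2.2.2.2 a b c ⟨hab, hcb, hne, h1, h2⟩).2

private lemma IsCPDAG.rule1 (hG : IsCPDAG G) {a b c : V} (h1 : G.dir a b) (h2 : G.undir b c) :
    G.adj a c := by
  have hne : a ≠ c := by rintro rfl; exact G.not_mixed _ _ h1 (G.undir_symm h2)
  obtain ⟨E', hE', hcb⟩ := hG.2 c b (G.undir_symm h2)
  exact hE'.vhelper (hE'.2.1 _ _ h1) hcb hne
    (fun hd => G.not_mixed _ _ hd (G.undir_symm h2))

private lemma IsCPDAG.pa_not_desc (hG : IsCPDAG G) {x v : V}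
    (h : Relation.ReflTransGen G.dir x v) (hd : G.dir v x) : False :=
  hG.acyclG (Relation.TransGen.tail' h hd)

private lemma IsCPDAG.sib_not_desc (hG : IsCPDAG G) {x v : V}
    (h : Relation.ReflTransGen G.dir x v) (hu : G.undir v x) : False := by
  obtain ⟨E', hE', hvx⟩ := hG.2 v x hu
  exact hE'.1 x (Relation.TransGen.tail' (hE'.mono_rt h) hvx)

private lemma IsCPDAG.descend (hG : IsCPDAG G) {x u : V} (h : Relation.ReflTransGen G.dir x u) :
    ∀ q, G.undir u q → Relation.ReflTransGen G.dir x q ∨ G.undir q x := by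
  induction h with
  | refl => exact fun q hq => Or.inr (G.undir_symm hq)
  | tail h1 h2 ih =>
    intro q hq
    rcases hG.rule1 h2 hq with hd | hd | hd
    · exact Or.inl (h1.tail hd)
    · obtain ⟨E', hE', huq⟩ := hG.2 _ _ hq
      exact (hE'.1 _ (Relation.TransGen.head (hE'.2.1 _ _ h2)
        (Relation.TransGen.head huq (Relation.TransGen.single (hE'.2.1 _ _ hd))))).elim
    · exact ih q hd

private lemma IsCPDAG.psib (hG : IsCPDAG G) (hE : InClass G E) {x s c : V} (hs : G.undir s x)
    (hxs : E x s) (hcs : E c s) (hcx : c ≠ x) :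
    Relation.ReflTransGen G.dir x c ∨ G.dir c x ∨ G.undir c x := by
  rcases hE.adj_of_edge hcs with hd | hd | hd
  · rcases hG.rule1 hd hs with h | h | h
    · exact Or.inr (Or.inl h)
    · exact Or.inl (Relation.ReflTransGen.single h)
    · exact Or.inr (Or.inr h)
  · exact (hE.edge_asym hcs (hE.2.1 _ _ hd)).elim
  · have hadj := hE.vhelper hxs hcs (Ne.symm hcx)
      (fun hdd => G.not_mixed _ _ hdd hd)
    rcases hadj with h | h | h
    · exact Or.inl (Relation.ReflTransGen.single h)
    · exact Or.inr (Or.inl h)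
    · exact Or.inr (Or.inr (G.undir_symm h))

private lemma chain'_rt_get {R : V → V → Prop} {L : List V} (h : List.Chain' R L)
    {i j : ℕ} (hij : i ≤ j) (hj : j < L.length) :
    Relation.ReflTransGen R (L.get ⟨i, lt_of_le_of_lt hij hj⟩) (L.get ⟨j, hj⟩) := by
  induction j, hij using Nat.le_induction with
  | base => exact Relation.ReflTransGen.refl
  | succ j hij ih =>
    exact (ih (lt_trans (Nat.lt_succ_self j) hj)).tail
      (List.isChain_iff_getElem.1 h j (by omega))

private lemma exists_good_chain {R : V → V → Prop} (hac : ∀ a, ¬ Relation.TransGen R a a)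
    {a b : V} (h : Relation.TransGen R a b) :
    ∃ p : List V, p.Nodup ∧ p.Chain' R ∧ p.head? = some a ∧ p.getLast? = some b ∧
      ∀ z ∈ p, Relation.ReflTransGen R a z ∧ Relation.ReflTransGen R z b := by
  induction h with
  | single hab =>
    rename_i c
    have hne : a ≠ c := by rintro rfl; exact hac a (Relation.TransGen.single hab)
    refine ⟨[a, c], by simp [hne], List.isChain_pair.2 hab, rfl, rfl, ?_⟩
    intro z hz
    rcases List.mem_pair.1 hz with rfl | rfl
    · exact ⟨Relation.ReflTransGen.refl, Relation.ReflTransGen.single hab⟩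
    · exact ⟨Relation.ReflTransGen.single hab, Relation.ReflTransGen.refl⟩
  | tail hab hbc ih =>
    rename_i b c
    obtain ⟨p, hnd, hch, hhd, hlast, hmem⟩ := ih
    have hcp : c ∉ p := fun hc => hac c (Relation.TransGen.tail' (hmem c hc).2 hbc)
    have hpne : p ≠ [] := by rintro rfl; simp at hhd
    refine ⟨p ++ [c], ?_, ?_, ?_, List.getLast?_concat, ?_⟩
    · rw [List.nodup_append']
      exact ⟨hnd, List.nodup_singleton _, by simpa using hcp⟩
    · refine List.isChain_append.2 ⟨hch, List.isChain_singleton _, ?_⟩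
      intro z hz w hw
      simp only [List.head?_cons, Option.mem_def, Option.some.injEq] at hw
      rw [hlast] at hz
      simp only [Option.mem_def, Option.some.injEq] at hz
      subst hz; subst hw; exact hbc
    · rw [List.head?_append_of_ne_nil _ hpne]
      exact hhd
    · intro z hz
      rcases List.mem_append.1 hz with hz | hz
      · exact ⟨(hmem z hz).1, (hmem z hz).2.tail hbc⟩
      · rcases List.mem_singleton.1 hz with rfl
        exact ⟨hab.to_reflTransGen.tail hbc, Relation.ReflTransGen.refl⟩


private lemma getLast?_drop_eq {L : List V} {j : ℕ} (hj : j < L.length) :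
    (L.drop j).getLast? = L.getLast? := by
  rw [List.getLast?_eq_getElem?, List.getLast?_eq_getElem?, List.length_drop,
    List.getElem?_drop]
  congr 1; omega

private lemma getLast?_take_eq {L : List V} {i : ℕ} (hi : i < L.length) :
    (L.take (i+1)).getLast? = some (L[i]'hi) := by
  rw [List.getLast?_eq_getElem?, List.length_take]
  have h : (i+1) ⊓ L.length - 1 = i := by omega
  rw [h, List.getElem?_take, if_pos (by omega), List.getElem?_eq_getElem hi]

private lemma head?_take_eq {L : List V} {i : ℕ} (hi : 0 < i) :
    (L.take i).head? = L.head? := by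
  rw [List.head?_eq_getElem?, List.head?_eq_getElem?, List.getElem?_take, if_pos hi]

private lemma chain'_rt_idx {R : V → V → Prop} {L : List V} (h : List.Chain' R L)
    {i j : ℕ} (hij : i ≤ j) (hj : j < L.length) :
    Relation.ReflTransGen R (L[i]'(lt_of_le_of_lt hij hj)) (L[j]'hj) := by
  induction j, hij using Nat.le_induction with
  | base => exact Relation.ReflTransGen.refl
  | succ j hij ih =>
    have hjj : j < L.length := by omega
    have hstep : R (L[j]'hjj) (L[j+1]'hj) := by
      have := List.isChain_iff_getElem.1 h j (by omega)
      simpa [List.get_eq_getElem] using this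
    exact (ih hjj).tail hstep

private lemma IsCPDAG.step (hG : IsCPDAG G) (hE : InClass G E) {x s : V}
    (hs : G.undir s x) (hxs : E x s) :
    ∀ n : ℕ, ∀ L : List V, ∀ z₀ w₀ : V, L.length ≤ n → L.head? = some w₀ →
      L.getLast? = some s → L.Chain' E → L.Nodup → x ∉ L → z₀ ∉ L →
      E z₀ w₀ → Relation.ReflTransGen G.dir x w₀ →
      Relation.ReflTransGen G.dir x z₀ ∨ G.dir z₀ x ∨ G.undir z₀ x := by
  intro n
  induction n with
  | zero =>
    intro L z₀ w₀ hlen hhd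
    exfalso
    have : L = [] := List.length_eq_zero_iff.1 (by omega)
    subst this; simp at hhd
  | succ n ih =>
    intro L z₀ w₀ hlen hhd hlast hch hnd hxL hzL hedge hrt
    have hLne : L ≠ [] := by rintro rfl; simp at hhd
    have h0 : 0 < L.length := List.length_pos_iff.2 hLne
    have hW0 : L[0]'h0 = w₀ := by
      have h := (List.head?_eq_getElem? (l := L)).symm
      rw [hhd, List.getElem?_eq_getElem h0] at h
      exact (Option.some_inj.1 h)
    have hlastL : L[L.length - 1]'(by omega) = s := by
      have h := (List.getLast?_eq_getElem? (l := L)).symm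
      rw [hlast, List.getElem?_eq_getElem (show L.length - 1 < L.length by omega)] at h
      exact (Option.some_inj.1 h)
    by_cases hz₀x : z₀ = x
    · subst hz₀x; exact Or.inl Relation.ReflTransGen.refl
    have hw₀s : w₀ ≠ s := fun h => hG.sib_not_desc (h ▸ hrt) hs
    have hlen2 : 2 ≤ L.length := by
      by_contra hcon
      apply hw₀s
      rw [← hW0, ← hlastL]
      congr 1; omega
    by_cases hun : G.undir z₀ w₀
    · rcases hG.descend hrt z₀ (G.undir_symm hun) with h | h
      · exact Or.inl h
      · exact Or.inr (Or.inr h)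
    have hdz : G.dir z₀ w₀ := by
      rcases hE.adj_of_edge hedge with h | h | h
      · exact h
      · exact (hE.edge_asym hedge (hE.2.1 _ _ h)).elim
      · exact (hun h).elim
    -- main case : G.dir z₀ w₀
    by_cases hchord : ∃ i j, ∃ (hi : i < L.length) (hj : j < L.length),
        i + 2 ≤ j ∧ G.adj (L[i]'hi) (L[j]'hj)
    · -- chord: shortcut or cycle
      obtain ⟨i, j, hi, hj, hij, hadj⟩ := hchord
      have horient : E (L[i]'hi) (L[j]'hj) ∨ E (L[j]'hj) (L[i]'hi) := by
        rcases hadj with h | h | h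
        · exact Or.inl (hE.2.1 _ _ h)
        · exact Or.inr (hE.2.1 _ _ h)
        · exact hE.2.2.1 _ _ h
      rcases horient with hfwd | hbwd
      · -- surgery
        refine ih (L.take (i+1) ++ L.drop j) z₀ w₀ ?_ ?_ ?_ ?_ ?_ ?_ ?_ hedge hrt
        · rw [List.length_append, List.length_take, List.length_drop,
            min_eq_left (by omega : i + 1 ≤ L.length)]; omega
        · rw [List.head?_append_of_ne_nil _ (List.length_pos_iff.1 (by
            rw [List.length_take]
            exact lt_inf_iff.2 ⟨by omega, by omega⟩))]
          rw [head?_take_eq (by omega)]; exact hhd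
        · rw [List.getLast?_append_of_ne_nil _ (List.length_pos_iff.1 (by
            rw [List.length_drop]; omega))]
          rw [getLast?_drop_eq hj]; exact hlast
        · refine List.isChain_append.2 ⟨List.IsChain.take hch _, List.IsChain.drop hch _, ?_⟩
          intro a ha b hb
          rw [getLast?_take_eq hi] at ha
          rw [List.head?_drop, List.getElem?_eq_getElem hj] at hb
          simp only [Option.mem_def, Option.some_inj] at ha hb
          rw [ha] at hfwd; rw [hb] at hfwd; exact hfwd
        · rw [List.nodup_append']
          exact ⟨List.Nodup.sublist (List.take_sublist _ _) hnd,
            List.Nodup.sublist (List.drop_sublist _ _) hnd,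
            List.disjoint_take_drop hnd (by omega)⟩
        · intro hm
          rcases List.mem_append.1 hm with hm | hm
          · exact hxL ((List.take_sublist _ _).subset hm)
          · exact hxL ((List.drop_sublist _ _).subset hm)
        · intro hm
          rcases List.mem_append.1 hm with hm | hm
          · exact hzL ((List.take_sublist _ _).subset hm)
          · exact hzL ((List.drop_sublist _ _).subset hm)
      · -- backward chord: cycle in E
        exact (hE.rt_cycle (chain'_rt_idx hch (by omega : i ≤ j) hj) hbwd).elim
    · -- chordless
      push_neg at hchord
      have h1 : 1 < L.length := by omega
      have hE01 : E (L[0]'h0) (L[1]'h1) := by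
        have := List.isChain_iff_getElem.1 hch 0 (by omega)
        simpa [List.get_eq_getElem] using this
      by_cases hadj01 : G.adj z₀ (L[1]'h1)
      · have ho : E z₀ (L[1]'h1) ∨ E (L[1]'h1) z₀ := by
          rcases hadj01 with h | h | h
          · exact Or.inl (hE.2.1 _ _ h)
          · exact Or.inr (hE.2.1 _ _ h)
          · exact hE.2.2.1 _ _ h
        rcases ho with h01 | h10
        · -- recurse on tail, or psib
          have hrec : Relation.ReflTransGen G.dir x (L[1]'h1) →
              Relation.ReflTransGen G.dir x z₀ ∨ G.dir z₀ x ∨ G.undir z₀ x := by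
            intro hrt1
            refine ih (L.drop 1) z₀ (L[1]'h1) ?_ ?_ ?_ (List.IsChain.drop hch 1) ?_ ?_ ?_ h01 hrt1
            · rw [List.length_drop]; omega
            · rw [List.head?_drop, List.getElem?_eq_getElem h1]
            · rw [getLast?_drop_eq h1]; exact hlast
            · exact List.Nodup.sublist (List.drop_sublist _ _) hnd
            · exact fun hm => hxL ((List.drop_sublist _ _).subset hm)
            · exact fun hm => hzL ((List.drop_sublist _ _).subset hm)
          rcases hE.adj_of_edge hE01 with hd | hd | hd
          · exact hrec ((hW0 ▸ hrt).tail hd)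
          · exact (hE.edge_asym hE01 (hE.2.1 _ _ hd)).elim
          · rcases hG.descend (hW0 ▸ hrt : Relation.ReflTransGen G.dir x (L[0]'h0)) _ hd with
              hrt1 | hsib1
            · exact hrec hrt1
            · rcases hE.2.2.1 _ _ hsib1 with hw₁x | hxw₁
              · exact (hE.rt_cycle ((hE.mono_rt (hW0 ▸ hrt)).tail hE01) hw₁x).elim
              · exact hG.psib hE hsib1 hxw₁ h01 hz₀x
        · -- cycle z₀ → w₀ → w₁ → z₀
          refine (hE.1 z₀ ?_).elim
          refine Relation.TransGen.head hedge (Relation.TransGen.head ?_ (.single h10))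
          rw [← hW0] at hedge ⊢
          exact hE01
      · -- scan with E₂
        obtain ⟨E₂, hE₂, hsx2⟩ := hG.2 s x hs
        have hscan : ∀ i, ∀ (hi1 : i + 1 < L.length), E₂ (L[i]'(by omega)) (L[i+1]'hi1) := by
          intro i
          induction i with
          | zero =>
            intro hi1
            rcases hE.adj_of_edge hE01 with hd | hd | hd
            · exact hE₂.2.1 _ _ hd
            · exact (hE.edge_asym hE01 (hE.2.1 _ _ hd)).elim
            · rcases hE₂.2.2.1 _ _ hd with h2 | h2
              · exact h2
              · exfalso
                have hne : z₀ ≠ L[1]'hi1 := fun h => hzL (h ▸ List.getElem_mem _)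
                have hadj' : G.adj z₀ (L[1]'h1) :=
                  hE₂.vhelper (hE₂.2.1 _ _ (by rw [hW0]; exact hdz)) h2 hne
                    (fun hdd => G.not_mixed _ _ hdd (G.undir_symm hd))
                exact hadj01 hadj'
          | succ i ihs =>
            intro hi1
            have hprev : E₂ (L[i]'(by omega)) (L[i+1]'(by omega)) := ihs (by omega)
            have eE : E (L[i+1]'(by omega)) (L[i+2]'hi1) := by
              have := List.isChain_iff_getElem.1 hch (i+1) (by omega)
              simpa [List.get_eq_getElem] using this
            rcases hE.adj_of_edge eE with hd | hd | hd
            · exact hE₂.2.1 _ _ hd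
            · exact (hE.edge_asym eE (hE.2.1 _ _ hd)).elim
            · rcases hE₂.2.2.1 _ _ hd with h2 | h2
              · exact h2
              · exfalso
                have hne : L[i]'(by omega) ≠ L[i+2]'hi1 := by
                  rw [Ne, hnd.getElem_inj_iff]; omega
                have hadj' := hE₂.vhelper hprev h2 hne
                  (fun hdd => G.not_mixed _ _ hdd (G.undir_symm hd))
                exact hchord i (i+2) (by omega) hi1 (le_refl _) hadj'
        have hch2 : List.Chain' E₂ L := by
          refine List.isChain_iff_getElem.2 (fun i hi => ?_)
          simpa [List.get_eq_getElem] using hscan i (by omega)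
        have hRT : Relation.ReflTransGen E₂ w₀ s := by
          have h := chain'_rt_idx hch2 (Nat.zero_le (L.length - 1)) (by omega)
          rwa [hW0, hlastL] at h
        exact ((hE₂.rt_cycle ((hE₂.mono_rt hrt).trans hRT) hsx2)).elim


private lemma rt_to_tg {R : V → V → Prop} {a b : V} (h : Relation.ReflTransGen R a b)
    (hne : a ≠ b) : Relation.TransGen R a b := by
  rcases h.cases_head with rfl | ⟨c, hac, hcb⟩
  · exact absurd rfl hne
  · exact Relation.TransGen.head' hac hcb

private lemma InClass.tg_rt_cycle (hE : InClass G E) {a b : V}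
    (h1 : Relation.TransGen E a b) (h2 : Relation.ReflTransGen E b a) : False :=
  hE.1 a (h1.trans_left h2)

private lemma stmt11_forward (hG : IsCPDAG G) {x y : V} (hc : Relation.TransGen G.dir x y)
    (E : V → V → Prop) (hE : InClass G E) : DConn E (G.pa x ∪ G.sib x) x y := by
  have hZ : ∀ v : V, v ∈ G.pa x ∪ G.sib x ↔ (G.dir v x ∨ G.undir v x) := fun v => by
    simp [PDGraph.pa, PDGraph.sib, Set.mem_union, Set.mem_setOf_eq]
  have hxZ : x ∉ G.pa x ∪ G.sib x := by
    intro hm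
    rcases (hZ x).1 hm with h | h
    · exact G.dir_irrefl x h
    · exact G.undir_irrefl x h
  have hyZ : y ∉ G.pa x ∪ G.sib x := by
    intro hm
    rcases (hZ y).1 hm with h | h
    · exact hG.pa_not_desc hc.to_reflTransGen h
    · exact hG.sib_not_desc hc.to_reflTransGen h
  obtain ⟨p, hnd, hch, hhd, hlast, hmem⟩ := exists_good_chain (fun a ha => hG.acyclG ha) hc
  refine ⟨hxZ, hyZ, p, hnd, List.IsChain.imp (fun a b h => Or.inl (hE.2.1 _ _ h)) hch, hhd, hlast, ?_⟩
  intro i h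
  have h2 : G.dir (p.get ⟨i+1, by omega⟩) (p.get ⟨i+2, h⟩) :=
    List.isChain_iff_getElem.1 hch (i+1) (by omega)
  constructor
  · intro hcc
    exact (hE.edge_asym (hE.2.1 _ _ h2) hcc.2).elim
  · intro _ hm
    have hmm := hmem (p.get ⟨i+1, by omega⟩) (by
      rw [List.get_eq_getElem]; exact List.getElem_mem _)
    rcases (hZ _).1 hm with hd | hd
    · exact hG.pa_not_desc hmm.1 hd
    · exact hG.sib_not_desc hmm.1 hd

private lemma stmt11_backward (hG : IsCPDAG G) (hE : InClass G E) {x y : V} (hxy : x ≠ y)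
    (hd : DConn E (G.pa x ∪ G.sib x) x y) : Relation.TransGen G.dir x y := by
  obtain ⟨hxZ, hyZ, p, hnd, hch, hhd, hlast, htri⟩ := hd
  have hZ : ∀ v : V, v ∈ G.pa x ∪ G.sib x ↔ (G.dir v x ∨ G.undir v x) := fun v => by
    simp [PDGraph.pa, PDGraph.sib, Set.mem_union, Set.mem_setOf_eq]
  have hLne : p ≠ [] := by rintro rfl; simp at hhd
  have h0 : 0 < p.length := List.length_pos_iff.2 hLne
  have hP0 : p[0]'h0 = x := by
    have h := (List.head?_eq_getElem? (l := p)).symm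
    rw [hhd, List.getElem?_eq_getElem h0] at h
    exact Option.some_inj.1 h
  have hPlast : p[p.length - 1]'(by omega) = y := by
    have h := (List.getLast?_eq_getElem? (l := p)).symm
    rw [hlast, List.getElem?_eq_getElem (show p.length - 1 < p.length by omega)] at h
    exact Option.some_inj.1 h
  have hn2 : 2 ≤ p.length := by
    by_contra hcon
    apply hxy
    rw [← hP0, ← hPlast]; congr 1; omega
  have htri' : ∀ j, ∀ (hj : j + 2 < p.length),
      ActiveTriple E (G.pa x ∪ G.sib x) (p[j]'(by omega)) (p[j+1]'(by omega)) (p[j+2]'hj) := by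
    intro j hj
    have h := htri j hj
    simpa [List.get_eq_getElem] using h
  have hstep : ∀ i, ∀ (hi1 : i + 1 < p.length),
      E (p[i]'(by omega)) (p[i+1]'hi1) ∨ E (p[i+1]'hi1) (p[i]'(by omega)) := by
    intro i hi1
    have h := List.isChain_iff_getElem.1 hch i (by omega)
    simpa [List.get_eq_getElem, SkelStep] using h
  have hne_x : ∀ i, ∀ (hi : i < p.length), 0 < i → p[i]'hi ≠ x := by
    intro i hi h0i heq
    rw [← hP0, hnd.getElem_inj_iff] at heq
    omega
  have hblock : ∀ i, ∀ (hi1 : i + 1 < p.length), E (p[i+1]'hi1) (p[i]'(by omega)) →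
      ¬ (G.dir (p[i+1]'hi1) x ∨ G.undir (p[i+1]'hi1) x) := by
    intro i hi1 hbk hZm
    by_cases hlastq : i + 1 = p.length - 1
    · apply hyZ
      rw [← hPlast]
      have e : p[p.length - 1]'(by omega) = p[i+1]'hi1 := by congr 1; omega
      rw [e]
      exact (hZ _).2 hZm
    · have hi2 : i + 2 < p.length := by omega
      have ht := htri' i hi2
      exact ht.2 (fun hc => hE.edge_asym hc.1 hbk) ((hZ _).2 hZm)
  have hstephelper : ∀ i, ∀ (hi : i < p.length) (hi1 : i + 1 < p.length), 0 < i →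
      ∀ s : V, G.undir s x → E x s → Relation.ReflTransGen E (p[i]'hi) s →
      Relation.ReflTransGen G.dir x (p[i]'hi) → E (p[i+1]'hi1) (p[i]'hi) →
      Relation.ReflTransGen G.dir x (p[i+1]'hi1) := by
    intro i hi hi1 h0i s hsx hxs hrts hrtx hbk
    have hpix : p[i]'hi ≠ x := hne_x i hi h0i
    have hpis : p[i]'hi ≠ s := fun h => hG.sib_not_desc (h ▸ hrtx) hsx
    have htg : Relation.TransGen E (p[i]'hi) s := rt_to_tg hrts hpis
    obtain ⟨Lc, hndc, hchc, hhdc, hlastc, hmemc⟩ := exists_good_chain hE.1 htg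
    have hxc : x ∉ Lc := fun hm =>
      hE.tg_rt_cycle (rt_to_tg (hE.mono_rt hrtx) (Ne.symm hpix)) (hmemc x hm).1
    have hzc : (p[i+1]'hi1) ∉ Lc := fun hm => hE.rt_cycle (hmemc _ hm).1 hbk
    have hcall := hG.step hE hsx hxs Lc.length Lc (p[i+1]'hi1) (p[i]'hi) le_rfl hhdc hlastc
      hchc hndc hxc hzc hbk hrtx
    rcases hcall with h | h | h
    · exact h
    · exact absurd (Or.inl h) (hblock i hi1 hbk)
    · exact absurd (Or.inr h) (hblock i hi1 hbk)
  have hsibjump : ∀ i, ∀ (hi1 : i + 1 < p.length),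
      E (p[i]'(by omega)) (p[i+1]'hi1) → Relation.ReflTransGen G.dir x (p[i]'(by omega)) →
      G.undir (p[i+1]'hi1) x →
      (G.undir (p[i+1]'hi1) x ∧ E x (p[i+1]'hi1) ∧
        ∃ (h2 : i + 2 < p.length), E (p[i+2]'h2) (p[i+1]'hi1)) := by
    intro i hi1 hfw hrtx hsib
    have hxp : E x (p[i+1]'hi1) := by
      rcases hE.2.2.1 _ _ hsib with h | h
      · exact absurd h (fun h => hE.rt_cycle ((hE.mono_rt hrtx).tail hfw) h)
      · exact h
    refine ⟨hsib, hxp, ?_⟩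
    by_cases hlastq : i + 1 = p.length - 1
    · exfalso
      apply hyZ
      rw [← hPlast]
      have e : p[p.length - 1]'(by omega) = p[i+1]'hi1 := by congr 1; omega
      rw [e]; exact (hZ _).2 (Or.inr hsib)
    · have hi2 : i + 2 < p.length := by omega
      have ht := htri' i hi2
      have hmm : (p[i+1]'hi1) ∈ G.pa x ∪ G.sib x := (hZ _).2 (Or.inr hsib)
      have hcol : E (p[i]'(by omega)) (p[i+1]'hi1) ∧ E (p[i+2]'hi2) (p[i+1]'hi1) := by
        by_contra hc
        exact (ht.2 hc) hmm
      exact ⟨hi2, hcol.2⟩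
  have hfwdtrans : ∀ i, ∀ (hi1 : i + 1 < p.length),
      E (p[i]'(by omega)) (p[i+1]'hi1) → Relation.ReflTransGen G.dir x (p[i]'(by omega)) →
      (E (p[i]'(by omega)) (p[i+1]'hi1) ∧ Relation.ReflTransGen G.dir x (p[i+1]'hi1)) ∨
      (E (p[i]'(by omega)) (p[i+1]'hi1) ∧ G.undir (p[i+1]'hi1) x ∧ E x (p[i+1]'hi1) ∧
        ∃ (h2 : i + 2 < p.length), E (p[i+2]'h2) (p[i+1]'hi1)) := by
    intro i hi1 hfw hrtx
    rcases hE.adj_of_edge hfw with hd | hd | hd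
    · exact Or.inl ⟨hfw, hrtx.tail hd⟩
    · exact (hE.edge_asym hfw (hE.2.1 _ _ hd)).elim
    · rcases hG.descend hrtx _ hd with h | h
      · exact Or.inl ⟨hfw, h⟩
      · exact Or.inr ⟨hfw, hsibjump i hi1 hfw hrtx h⟩
  have claim : ∀ i, 0 < i → ∀ (hi : i < p.length),
      (E (p[i-1]'(by omega)) (p[i]'hi) ∧ Relation.ReflTransGen G.dir x (p[i]'hi)) ∨
      (E (p[i-1]'(by omega)) (p[i]'hi) ∧ G.undir (p[i]'hi) x ∧ E x (p[i]'hi) ∧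
        ∃ (h2 : i + 1 < p.length), E (p[i+1]'h2) (p[i]'hi)) ∨
      (E (p[i]'hi) (p[i-1]'(by omega)) ∧ Relation.ReflTransGen G.dir x (p[i]'hi) ∧
        ∃ s, G.undir s x ∧ E x s ∧ Relation.ReflTransGen E (p[i]'hi) s) := by
    intro i
    induction i with
    | zero => exact fun h => absurd h (by omega)
    | succ i ihp =>
      intro _ hi1
      simp only [Nat.add_sub_cancel]
      rcases Nat.eq_zero_or_pos i with rfl | hpos
      · rcases hstep 0 hi1 with hf | hb
        · have hrt0 : Relation.ReflTransGen G.dir x (p[0]'(by omega)) := by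
            rw [hP0]
          rcases hfwdtrans 0 hi1 hf hrt0 with h | h
          · exact Or.inl h
          · exact Or.inr (Or.inl h)
        · exfalso
          have hbx : E (p[1]'hi1) x := by rw [← hP0]; exact hb
          rcases hE.adj_of_edge hbx with hd | hd | hd
          · exact hblock 0 hi1 hb (Or.inl hd)
          · exact hE.edge_asym hbx (hE.2.1 _ _ hd)
          · exact hblock 0 hi1 hb (Or.inr hd)
      · have hprev := ihp hpos (by omega)
        rcases hstep i hi1 with hf | hb
        · have hrtx : Relation.ReflTransGen G.dir x (p[i]'(by omega)) := by
            rcases hprev with ⟨_, h⟩ | ⟨_, _, _, ⟨h2, hbk⟩⟩ | ⟨_, h, _⟩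
            · exact h
            · exact (hE.edge_asym hf hbk).elim
            · exact h
          rcases hfwdtrans i hi1 hf hrtx with h | h
          · exact Or.inl h
          · exact Or.inr (Or.inl h)
        · rcases hprev with ⟨hfwprev, hrtx⟩ | ⟨hfwprev, hsib, hxp, ⟨h2, hbk⟩⟩ |
            ⟨hbkprev, hrtx, s, hsx, hxs, hrts⟩
          · have ht := htri' (i-1) (by omega)
            have e1 : i - 1 + 1 = i := by omega
            have e2 : i - 1 + 2 = i + 1 := by omega
            simp only [e1, e2] at ht
            obtain ⟨d, hdZ, hrtd⟩ := ht.1 ⟨hfwprev, hb⟩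
            rcases (hZ d).1 hdZ with hdd | hdd
            · exfalso
              have htgx : Relation.TransGen E x (p[i]'(by omega)) :=
                rt_to_tg (hE.mono_rt hrtx) (Ne.symm (hne_x i (by omega) hpos))
              exact hE.1 x (htgx.trans_left (hrtd.tail (hE.2.1 _ _ hdd)))
            · have hxd : E x d := by
                rcases hE.2.2.1 _ _ hdd with h | h
                · exfalso
                  have htgx : Relation.TransGen E x (p[i]'(by omega)) :=
                    rt_to_tg (hE.mono_rt hrtx) (Ne.symm (hne_x i (by omega) hpos))
                  exact hE.1 x (htgx.trans_left (hrtd.tail h))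
                · exact h
              have hrt1 := hstephelper i (by omega) hi1 hpos d hdd hxd hrtd hrtx hb
              exact Or.inr (Or.inr ⟨hb, hrt1, d, hdd, hxd,
                (Relation.ReflTransGen.single hb).trans hrtd⟩)
          · have hrt1 : Relation.ReflTransGen G.dir x (p[i+1]'hi1) := by
              rcases hG.psib hE hsib hxp hb (hne_x (i+1) hi1 (by omega)) with h | h | h
              · exact h
              · exact absurd (Or.inl h) (hblock i hi1 hb)
              · exact absurd (Or.inr h) (hblock i hi1 hb)
            exact Or.inr (Or.inr ⟨hb, hrt1, p[i]'(by omega), hsib, hxp,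
              Relation.ReflTransGen.single hb⟩)
          · have hrt1 := hstephelper i (by omega) hi1 hpos s hsx hxs hrts hrtx hb
            exact Or.inr (Or.inr ⟨hb, hrt1, s, hsx, hxs,
              (Relation.ReflTransGen.single hb).trans hrts⟩)
  have hfin := claim (p.length - 1) (by omega) (by omega)
  rcases hfin with ⟨_, h⟩ | ⟨_, _, _, ⟨h2, _⟩⟩ | ⟨_, h, _⟩
  · exact rt_to_tg (hPlast ▸ h) hxy
  · omega
  · exact rt_to_tg (hPlast ▸ h) hxy

end Stmt11Aux


/-- `x` is an explicit cause of `y` iff `x` and `y` are d-connected given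
`pa(x, G*) ∪ sib(x, G*)` in the DAGs of the equivalence class. -/
theorem stmt11 (G : PDGraph V) (hG : IsCPDAG G) (x y : V) (hxy : x ≠ y) :
    ExplicitCause G x y ↔
      ∀ E, InClass G E → DConn E (G.pa x ∪ G.sib x) x y := by
  constructor
  · intro hc E hE
    exact stmt11_forward hG hc E hE
  · intro h
    obtain ⟨E₀, hE₀⟩ := hG.1
    exact stmt11_backward hG hE₀ hxy (h E₀ hE₀)
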